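/- Let f: ℝ^p → ℝ be L_f-smooth, g: ℝ^p → ℝ ∪ {∞} proper, convex and lsc, and 0 < γ < 1/L_f. Writing h = −f, the DC envelope φ_γ = g^γ − h^γ and the forward-backward envelope φ_γ^FB satisfy φ_γ^FB(u) = φ_γ(u − γ∇f(u)) for every u ∈ ℝ^p, and φ_γ(s) = φ_γ^FB(prox_{−γf}(s)) for every s ∈ ℝ^p. -/

import Mathlib

open scoped InnerProductSpace
noncomputable section

/-- `ℝ^p` as a Euclidean space. -/
abbrev Euc (p : ℕ) := EuclideanSpace ℝ (Fin p)

variable {p : ℕ}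

/-- `f : ℝ^p → ℝ ∪ {∞}` (modelled with `EReal` values never equal to `-∞`) is proper. -/
def ProperFun (f : Euc p → EReal) : Prop :=
  (∀ x, f x ≠ ⊥) ∧ (∃ x, f x ≠ ⊤)

/-- Convexity for extended-real-valued functions. -/
def ConvexFun (f : Euc p → EReal) : Prop :=
  ∀ x y : Euc p, ∀ t : ℝ, 0 ≤ t → t ≤ 1 →
    f (t • x + (1 - t) • y) ≤ (t : EReal) * f x + ((1 - t : ℝ) : EReal) * f y

/-- The Moreau envelope `f^γ(x) = inf_w { f(w) + (1/(2γ))‖w − x‖² }`, as an extended real. -/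
def moreau (f : Euc p → EReal) (γ : ℝ) (x : Euc p) : EReal :=
  ⨅ w : Euc p, f w + ((1/(2*γ) * ‖w - x‖^2 : ℝ) : EReal)

/-- The (real-valued) Moreau envelope. -/
def moreauR (f : Euc p → EReal) (γ : ℝ) (x : Euc p) : ℝ := (moreau f γ x).toReal

/-- `u` minimizes `w ↦ −f(w) + (1/(2γ))‖w − s‖²` (for real-valued `f`). -/
def NegProxObjMin (f : Euc p → ℝ) (γ : ℝ) (s u : Euc p) : Prop :=
  ∀ w, -f u + 1/(2*γ) * ‖u - s‖^2 ≤ -f w + 1/(2*γ) * ‖w - s‖^2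

/-- Descent lemma: an `L`-Lipschitz-gradient function satisfies the quadratic upper bound. -/
theorem descent_aux (f : Euc p → ℝ) (f' : Euc p → Euc p)
    (hf : ∀ x, HasGradientAt f (f' x) x)
    (Lf : ℝ) (hLf : 0 ≤ Lf) (hlip : LipschitzWith (Real.toNNReal Lf) f')
    (u w : Euc p) :
    f w ≤ f u + ⟪f' u, w - u⟫_ℝ + Lf/2 * ‖w - u‖^2 := by
  set v := w - u with hv
  have hφ : ∀ t : ℝ, HasDerivAt (fun t : ℝ => f (u + t • v)) ⟪f' (u + t • v), v⟫_ℝ t := by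
    intro t
    have hline : HasDerivAt (fun t : ℝ => u + t • v) v t := by
      simpa using ((hasDerivAt_id t).smul_const v).const_add u
    have := (hf (u + t • v)).hasFDerivAt.comp_hasDerivAt t hline
    simp [InnerProductSpace.toDual_apply_apply] at this
    exact this
  set ψ : ℝ → ℝ := fun t => f (u + t • v) - ⟪f' u, v⟫_ℝ * t - Lf/2 * ‖v‖^2 * t^2 with hψ
  have hψd : ∀ t : ℝ,
      HasDerivAt ψ (⟪f' (u + t • v), v⟫_ℝ - ⟪f' u, v⟫_ℝ * 1 - Lf/2 * ‖v‖^2 * (↑2 * t ^ 1)) t := by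
    intro t
    exact ((hφ t).sub ((hasDerivAt_id t).const_mul ⟪f' u, v⟫_ℝ)).sub
      ((hasDerivAt_pow 2 t).const_mul (Lf/2 * ‖v‖^2))
  have hlipR : ∀ x y : Euc p, ‖f' x - f' y‖ ≤ Lf * ‖x - y‖ := by
    intro x y
    have := hlip.dist_le_mul x y
    rwa [Real.coe_toNNReal _ hLf, dist_eq_norm, dist_eq_norm] at this
  have hderiv_nonpos : ∀ t : ℝ, 0 ≤ t →
      ⟪f' (u + t • v), v⟫_ℝ - ⟪f' u, v⟫_ℝ * 1 - Lf/2 * ‖v‖^2 * (↑2 * t ^ 1) ≤ 0 := by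
    intro t ht
    have h1 : ⟪f' (u + t • v) - f' u, v⟫_ℝ ≤ ‖f' (u + t • v) - f' u‖ * ‖v‖ :=
      real_inner_le_norm _ _
    have h2 : ‖f' (u + t • v) - f' u‖ ≤ Lf * (t * ‖v‖) := by
      have := hlipR (u + t • v) u
      simpa [norm_smul, abs_of_nonneg ht] using this
    have h3 : ⟪f' (u + t • v) - f' u, v⟫_ℝ ≤ Lf * (t * ‖v‖) * ‖v‖ :=
      h1.trans (by nlinarith [norm_nonneg v])
    rw [inner_sub_left] at h3
    simp only [pow_one, Nat.cast_ofNat, mul_one]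
    nlinarith [sq_nonneg ‖v‖]
  have hanti : AntitoneOn ψ (Set.Icc (0:ℝ) 1) := by
    apply antitoneOn_of_hasDerivWithinAt_nonpos (convex_Icc 0 1)
      (fun t _ => (hψd t).continuousAt.continuousWithinAt)
      (fun t ht => (hψd t).hasDerivWithinAt)
    intro t ht
    rw [interior_Icc] at ht
    exact hderiv_nonpos t ht.1.le
  have hkey := hanti (Set.left_mem_Icc.2 one_pos.le) (Set.right_mem_Icc.2 one_pos.le) one_pos.le
  simp only [hψ, zero_smul, add_zero, one_smul, mul_zero, zero_mul, sub_zero, mul_one,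
    one_pow, ne_eq, OfNat.ofNat_ne_zero, not_false_eq_true, zero_pow] at hkey
  have huv : u + v = w := by rw [hv]; abel
  rw [huv] at hkey
  linarith

/-- First-order condition: a minimizer of the negative-prox objective satisfies
`u - s = γ • f' u`. -/
theorem gradzero_aux (f : Euc p → ℝ) (f' : Euc p → Euc p)
    (hf : ∀ x, HasGradientAt f (f' x) x)
    (γ : ℝ) (hγ : 0 < γ) (s u : Euc p)
    (hmin : NegProxObjMin f γ s u) :
    u - s = γ • f' u := by
  have h1 : HasFDerivAt (fun w : Euc p => w - s) (ContinuousLinearMap.id ℝ (Euc p)) u :=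
    (hasFDerivAt_id u).sub_const s
  have hns : HasFDerivAt (fun w : Euc p => ‖w - s‖^2)
      ((fderivInnerCLM ℝ (u - s, u - s)).comp ((ContinuousLinearMap.id ℝ (Euc p)).prod
        (ContinuousLinearMap.id ℝ (Euc p)))) u := by
    have := (h1.inner ℝ h1)
    refine HasFDerivAt.congr_of_eventuallyEq this ?_
    filter_upwards with w
    rw [real_inner_self_eq_norm_sq]
  have hΦ : HasFDerivAt (fun w : Euc p => -f w + 1/(2*γ) * ‖w - s‖^2)
      (-(InnerProductSpace.toDual ℝ (Euc p) (f' u)) + (1/(2*γ)) •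
        ((fderivInnerCLM ℝ (u - s, u - s)).comp ((ContinuousLinearMap.id ℝ (Euc p)).prod
          (ContinuousLinearMap.id ℝ (Euc p))))) u :=
    ((hf u).hasFDerivAt.neg).add (hns.const_mul _)
  have hloc : IsLocalMin (fun w : Euc p => -f w + 1/(2*γ) * ‖w - s‖^2) u :=
    Filter.Eventually.of_forall hmin
  have hzero := hloc.hasFDerivAt_eq_zero hΦ
  have heval : ∀ e : Euc p, -⟪f' u, e⟫_ℝ + (1/(2*γ)) * (⟪u - s, e⟫_ℝ + ⟪e, u - s⟫_ℝ) = 0 := by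
    intro e
    have := congrFun (congrArg DFunLike.coe hzero) e
    simpa [fderivInnerCLM_apply, InnerProductSpace.toDual_apply_apply] using this
  have key : ∀ e : Euc p, ⟪(1/γ) • (u - s) - f' u, e⟫_ℝ = 0 := by
    intro e
    have h := heval e
    rw [real_inner_comm (u - s) e] at h
    rw [inner_sub_left, inner_smul_left]
    have hstar : (starRingEnd ℝ) (1/γ) = 1/γ := by simp
    rw [hstar]
    have hγ' : γ ≠ 0 := hγ.ne'
    revert h
    generalize ⟪f' u, e⟫_ℝ = a
    generalize ⟪u - s, e⟫_ℝ = b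
    intro h
    field_simp at h ⊢
    linarith
  have hkey := key ((1/γ) • (u - s) - f' u)
  rw [inner_self_eq_zero, sub_eq_zero] at hkey
  rw [← hkey, smul_smul, mul_one_div, div_self hγ.ne', one_smul]

/-- for `L_f`-smooth `f`, proper convex lsc `g` and `0 < γ < 1/L_f`, writing
`h = −f`, the DC envelope `φ_γ = g^γ − h^γ` and the forward-backward envelope
`φ_γ^FB(u) = f(u) − (γ/2)‖∇f(u)‖² + g^γ(u − γ∇f(u))` satisfy
`φ_γ^FB = φ_γ ∘ (id − γ∇f)` and `φ_γ = φ_γ^FB ∘ prox_{−γf}`. -/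
theorem statement9
    (f : Euc p → ℝ) (f' : Euc p → Euc p)
    (hf : ∀ x, HasGradientAt f (f' x) x)
    (Lf : ℝ) (hLf : 0 ≤ Lf) (hlip : LipschitzWith (Real.toNNReal Lf) f')
    (g : Euc p → EReal)
    (hg_proper : ProperFun g) (hg_convex : ConvexFun g) (hg_lsc : LowerSemicontinuous g)
    (γ : ℝ) (hγ : 0 < γ) (hγL : γ * Lf < 1)
    (proxnf : Euc p → Euc p)
    (hproxnf : ∀ s, NegProxObjMin f γ s (proxnf s) ∧
      ∀ w, NegProxObjMin f γ s w → w = proxnf s) :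
    (∀ u : Euc p,
        f u - γ/2 * ‖f' u‖^2 + moreauR g γ (u - γ • f' u) =
          moreauR g γ (u - γ • f' u)
            - moreauR (fun x => ((-f x : ℝ) : EReal)) γ (u - γ • f' u)) ∧
      (∀ s : Euc p,
        moreauR g γ s - moreauR (fun x => ((-f x : ℝ) : EReal)) γ s =
          f (proxnf s) - γ/2 * ‖f' (proxnf s)‖^2
            + moreauR g γ (proxnf s - γ • f' (proxnf s))) := by
  have hγ' : γ ≠ 0 := hγ.ne'
  -- the value of the negative Moreau envelope at a point where the min is attained
  have hattain : ∀ s u : Euc p, NegProxObjMin f γ s u →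
      moreauR (fun x => ((-f x : ℝ) : EReal)) γ s = -f u + 1/(2*γ) * ‖u - s‖^2 := by
    intro s u hmin
    have hcoe : ∀ w : Euc p,
        ((-f w : ℝ) : EReal) + ((1/(2*γ) * ‖w - s‖^2 : ℝ) : EReal)
          = ((-f w + 1/(2*γ) * ‖w - s‖^2 : ℝ) : EReal) := by
      intro w; rw [← EReal.coe_add]
    have hmor : moreau (fun x => ((-f x : ℝ) : EReal)) γ s
        = ((-f u + 1/(2*γ) * ‖u - s‖^2 : ℝ) : EReal) := by
      apply le_antisymm
      · calc moreau (fun x => ((-f x : ℝ) : EReal)) γ s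
            ≤ ((-f u : ℝ) : EReal) + ((1/(2*γ) * ‖u - s‖^2 : ℝ) : EReal) := iInf_le _ u
          _ = _ := hcoe u
      · refine le_iInf fun w => ?_
        rw [hcoe w]
        exact_mod_cast hmin w
    rw [moreauR, hmor, EReal.toReal_coe]
  -- if `u - s = γ • f' u` then `u` minimizes the negative-prox objective
  have hminkey : ∀ s u : Euc p, u - s = γ • f' u → NegProxObjMin f γ s u := by
    intro s u hus w
    have hdesc := descent_aux f f' hf Lf hLf hlip u w
    have hws : w - s = (w - u) + γ • f' u := by rw [← hus]; abel
    have hnormws : ‖w - s‖^2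
        = ‖w - u‖^2 + 2*(γ*⟪f' u, w - u⟫_ℝ) + γ^2*‖f' u‖^2 := by
      rw [hws, norm_add_sq_real, real_inner_smul_right, real_inner_comm, norm_smul]
      rw [Real.norm_eq_abs, abs_of_pos hγ]
      ring
    have hnormus : ‖u - s‖^2 = γ^2*‖f' u‖^2 := by
      rw [hus, norm_smul, Real.norm_eq_abs, abs_of_pos hγ]
      ring
    have hL2 : Lf/2 * ‖w - u‖^2 ≤ 1/(2*γ) * ‖w - u‖^2 := by
      apply mul_le_mul_of_nonneg_right _ (sq_nonneg _)
      rw [div_le_div_iff₀ (by norm_num) (by positivity)]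
      nlinarith
    have e1 : 1/(2*γ) * (‖w - u‖^2 + 2*(γ*⟪f' u, w - u⟫_ℝ) + γ^2*‖f' u‖^2)
        = 1/(2*γ) * ‖w - u‖^2 + ⟪f' u, w - u⟫_ℝ + 1/(2*γ) * (γ^2*‖f' u‖^2) := by
      field_simp
    rw [hnormws, hnormus, e1]
    linarith
  -- the common computation
  have hhalf : ∀ x : ℝ, 1/(2*γ) * (γ^2 * x) = γ/2 * x := by
    intro x; field_simp
  constructor
  · intro u
    have hus : u - (u - γ • f' u) = γ • f' u := by abel
    have hmin : NegProxObjMin f γ (u - γ • f' u) u := hminkey _ u hus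
    have hval := hattain _ u hmin
    rw [hus, norm_smul, Real.norm_eq_abs, abs_of_pos hγ] at hval
    have : (γ * ‖f' u‖)^2 = γ^2 * ‖f' u‖^2 := by ring
    rw [this, hhalf] at hval
    rw [hval]
    ring
  · intro s
    obtain ⟨hm, _⟩ := hproxnf s
    have hgz : proxnf s - s = γ • f' (proxnf s) :=
      gradzero_aux f f' hf γ hγ s (proxnf s) hm
    have hs : proxnf s - γ • f' (proxnf s) = s := by rw [← hgz]; abel
    have hval := hattain s (proxnf s) hm
    rw [hgz, norm_smul, Real.norm_eq_abs, abs_of_pos hγ] at hval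
    have : (γ * ‖f' (proxnf s)‖)^2 = γ^2 * ‖f' (proxnf s)‖^2 := by ring
    rw [this, hhalf] at hval
    rw [hs, hval]
    ring
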